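/- Under the stated two-lane assumptions with R₁ = R₂ = R, assume in addition S(κ,κ) = 0 for every κ ∈ [0,R]. Let T > 0 and let (ρ₁,ρ₂) : [0,T] → [0,R]×[0,R] be differentiable functions solving ρ₁′(t) = −(1/τ)·S(ρ₁(t),ρ₂(t)) and ρ₂′(t) = (1/τ)·S(ρ₁(t),ρ₂(t)) for all t ∈ [0,T]. Then the total density is conserved, ρ₁(t) + ρ₂(t) = ρ₁(0) + ρ₂(0) for all t ∈ [0,T], the lane difference decays exponentially, |ρ₁(t) − ρ₂(t)| ≤ e^{−2ct/τ}·|ρ₁(0) − ρ₂(0)|, and consequently |ρ_j(t) − (ρ₁(0)+ρ₂(0))/2| ≤ (1/2)·e^{−2ct/τ}·|ρ₁(0) − ρ₂(0)| for j = 1,2 and all t ∈ [0,T]. (Exponential equilibration of the lane densities toward their common mean, the two-lane instance of estimate (3.14) in the proof of Theorem 3.4.) -/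

import Mathlib

open Set

private lemma key_sign (R c 𝒮 : ℝ) (hc : 0 < c)
    (S : ℝ → ℝ → ℝ)
    (hSC1 : ContDiff ℝ 1 (Function.uncurry S))
    (hS1 : ∀ u ∈ Icc (0:ℝ) R, ∀ w ∈ Icc (0:ℝ) R,
      deriv (fun u' => S u' w) u ∈ Icc c 𝒮)
    (hS2 : ∀ u ∈ Icc (0:ℝ) R, ∀ w ∈ Icc (0:ℝ) R,
      deriv (fun w' => S u w') w ∈ Icc (-𝒮) (-c))
    (hdiag : ∀ κ ∈ Icc (0:ℝ) R, S κ κ = 0) :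
    ∀ u ∈ Icc (0:ℝ) R, ∀ w ∈ Icc (0:ℝ) R, c * (u - w)^2 ≤ (u - w) * S u w := by
  have hdiff : ∀ (a b : ℝ), DifferentiableAt ℝ (fun x => S x b) a ∧
      DifferentiableAt ℝ (fun y => S a y) b := by
    intro a b
    have h := (hSC1.differentiable one_ne_zero)
    constructor
    · exact (h (a, b)).comp a ((differentiableAt_id (𝕜 := ℝ) (x := a)).prodMk (differentiableAt_const b))
    · exact (h (a, b)).comp b ((differentiableAt_const a).prodMk differentiableAt_id)
  intro u hu w hw
  rcases le_total w u with hle | hle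
  · -- u ≥ w : S u w ≥ c (u - w), via g x = S x w - c x monotone on [w,u]
    have hmono : MonotoneOn (fun x => S x w - c * x) (Icc w u) := by
      apply monotoneOn_of_deriv_nonneg (convex_Icc w u)
      · exact Continuous.continuousOn (by
          have : Continuous (fun x : ℝ => S x w) :=
            (hSC1.continuous).comp (continuous_id.prodMk continuous_const)
          fun_prop)
      · intro x hx
        exact (((hdiff x w).1).sub ((differentiableAt_id).const_mul c)).differentiableWithinAt
      · intro x hx
        rw [interior_Icc] at hx
        have hxR : x ∈ Icc (0:ℝ) R := ⟨le_trans hw.1 hx.1.le, le_trans hx.2.le hu.2⟩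
        have hd1 : HasDerivAt (fun x' => S x' w) (deriv (fun x' => S x' w) x) x :=
          ((hdiff x w).1).hasDerivAt
        have hd : HasDerivAt (fun x' => S x' w - c * x') (deriv (fun x' => S x' w) x - c * 1) x :=
          hd1.sub ((hasDerivAt_id x).const_mul c)
        rw [hd.deriv]
        have := (hS1 x hxR w hw).1
        linarith
    have := hmono (left_mem_Icc.2 hle) (right_mem_Icc.2 hle) hle
    simp only [hdiag w hw] at this
    have hS : c * (u - w) ≤ S u w := by linarith
    nlinarith [sub_nonneg.2 hle]
  · -- u ≤ w : S u w ≤ c (u - w), via g y = S u y + (-c) y ... antitone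
    have hanti : AntitoneOn (fun y => S u y + c * y) (Icc u w) := by
      apply antitoneOn_of_deriv_nonpos (convex_Icc u w)
      · exact Continuous.continuousOn (by
          have : Continuous (fun y : ℝ => S u y) :=
            (hSC1.continuous).comp (continuous_const.prodMk continuous_id)
          fun_prop)
      · intro y hy
        exact (((hdiff u y).2).add ((differentiableAt_id).const_mul c)).differentiableWithinAt
      · intro y hy
        rw [interior_Icc] at hy
        have hyR : y ∈ Icc (0:ℝ) R := ⟨le_trans hu.1 hy.1.le, le_trans hy.2.le hw.2⟩
        have hd1 : HasDerivAt (fun y' => S u y') (deriv (fun y' => S u y') y) y :=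
          ((hdiff u y).2).hasDerivAt
        have hd : HasDerivAt (fun y' => S u y' + c * y') (deriv (fun y' => S u y') y + c * 1) y :=
          hd1.add ((hasDerivAt_id y).const_mul c)
        rw [hd.deriv]
        have := (hS2 u hu y hyR).2
        linarith
    have := hanti (left_mem_Icc.2 hle) (right_mem_Icc.2 hle) hle
    simp only [hdiag u hu] at this
    have hS : S u w ≤ c * (u - w) := by linarith
    nlinarith [sub_nonpos.2 hle]

/-- Exponential equilibration of the lane densities toward their common mean
(two-lane instance of estimate (3.14) in the proof of Theorem 3.4). -/
theorem two_lane_ode_exponential_equilibration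
    (R c 𝒮 τ : ℝ)
    (hR : 0 < R) (hc : 0 < c) (hc𝒮 : c ≤ 𝒮) (hτ : 0 < τ)
    (S : ℝ → ℝ → ℝ)
    (hSC1 : ContDiff ℝ 1 (Function.uncurry S))
    (hS1 : ∀ u ∈ Icc (0:ℝ) R, ∀ w ∈ Icc (0:ℝ) R,
      deriv (fun u' => S u' w) u ∈ Icc c 𝒮)
    (hS2 : ∀ u ∈ Icc (0:ℝ) R, ∀ w ∈ Icc (0:ℝ) R,
      deriv (fun w' => S u w') w ∈ Icc (-𝒮) (-c))
    (hS00 : S 0 0 = 0) (hSRR : S R R = 0)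
    (hdiag : ∀ κ ∈ Icc (0:ℝ) R, S κ κ = 0)
    (Tmax : ℝ) (hT : 0 < Tmax)
    (ρ₁ ρ₂ : ℝ → ℝ)
    (hbox : ∀ t ∈ Icc (0:ℝ) Tmax, ρ₁ t ∈ Icc (0:ℝ) R ∧ ρ₂ t ∈ Icc (0:ℝ) R)
    (hode₁ : ∀ t ∈ Icc (0:ℝ) Tmax,
      HasDerivAt ρ₁ (-(1 / τ) * S (ρ₁ t) (ρ₂ t)) t)
    (hode₂ : ∀ t ∈ Icc (0:ℝ) Tmax,
      HasDerivAt ρ₂ ((1 / τ) * S (ρ₁ t) (ρ₂ t)) t) :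
    (∀ t ∈ Icc (0:ℝ) Tmax, ρ₁ t + ρ₂ t = ρ₁ 0 + ρ₂ 0) ∧
    (∀ t ∈ Icc (0:ℝ) Tmax,
      |ρ₁ t - ρ₂ t| ≤ Real.exp (-2 * c * t / τ) * |ρ₁ 0 - ρ₂ 0|) ∧
    (∀ t ∈ Icc (0:ℝ) Tmax,
      |ρ₁ t - (ρ₁ 0 + ρ₂ 0) / 2| ≤ (1 / 2) * Real.exp (-2 * c * t / τ) * |ρ₁ 0 - ρ₂ 0| ∧
      |ρ₂ t - (ρ₁ 0 + ρ₂ 0) / 2| ≤ (1 / 2) * Real.exp (-2 * c * t / τ) * |ρ₁ 0 - ρ₂ 0|) := by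
  have zero_mem : (0:ℝ) ∈ Icc (0:ℝ) Tmax := ⟨le_refl 0, hT.le⟩
  -- conservation
  have hsum : ∀ t ∈ Icc (0:ℝ) Tmax, ρ₁ t + ρ₂ t = ρ₁ 0 + ρ₂ 0 := by
    have hcont : ContinuousOn (fun t => ρ₁ t + ρ₂ t) (Icc 0 Tmax) := fun t ht =>
      (((hode₁ t ht).continuousAt.add (hode₂ t ht).continuousAt)).continuousWithinAt
    have := constant_of_has_deriv_right_zero hcont (f := fun t => ρ₁ t + ρ₂ t)
      (fun t ht => by
        have ht' : t ∈ Icc (0:ℝ) Tmax := ⟨ht.1, ht.2.le⟩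
        have h := (hode₁ t ht').add (hode₂ t ht')
        have : HasDerivAt (fun t => ρ₁ t + ρ₂ t) 0 t := by
          exact h.congr_deriv (by ring)
        exact this.hasDerivWithinAt)
    exact this
  have hdecay : ∀ t ∈ Icc (0:ℝ) Tmax,
      |ρ₁ t - ρ₂ t| ≤ Real.exp (-2 * c * t / τ) * |ρ₁ 0 - ρ₂ 0| := by
    set k : ℝ := 4 * c / τ with hk
    set g : ℝ → ℝ := fun t => Real.exp (k * t) * (ρ₁ t - ρ₂ t)^2 with hg
    have hganti : AntitoneOn g (Icc 0 Tmax) := by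
      apply antitoneOn_of_deriv_nonpos (convex_Icc 0 Tmax)
      · intro t ht
        exact (((Real.continuous_exp.comp (continuous_const.mul continuous_id)).continuousAt).mul
          ((((hode₁ t ht).continuousAt.sub (hode₂ t ht).continuousAt)).pow 2)).continuousWithinAt
      · intro t ht
        rw [interior_Icc] at ht
        have ht' : t ∈ Icc (0:ℝ) Tmax := ⟨ht.1.le, ht.2.le⟩
        exact ((((Real.differentiable_exp.comp
          ((differentiable_const k).mul differentiable_id)) t)).mul
          (((hode₁ t ht').differentiableAt.sub (hode₂ t ht').differentiableAt).pow 2)).differentiableWithinAt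
      · intro t ht
        rw [interior_Icc] at ht
        have ht' : t ∈ Icc (0:ℝ) Tmax := ⟨ht.1.le, ht.2.le⟩
        have hδ : HasDerivAt (fun t => ρ₁ t - ρ₂ t)
            (-(1 / τ) * S (ρ₁ t) (ρ₂ t) - (1 / τ) * S (ρ₁ t) (ρ₂ t)) t :=
          (hode₁ t ht').sub (hode₂ t ht')
        have hE : HasDerivAt (fun t => Real.exp (k * t)) (Real.exp (k * t) * k) t := by
          exact ((Real.hasDerivAt_exp (k * t)).comp t ((hasDerivAt_id t).const_mul k)).congr_deriv (by ring)
        have hsq : HasDerivAt (fun t => (ρ₁ t - ρ₂ t)^2)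
            (2 * (ρ₁ t - ρ₂ t) * (-(1 / τ) * S (ρ₁ t) (ρ₂ t) - (1 / τ) * S (ρ₁ t) (ρ₂ t))) t := by
          have := hδ.pow 2
          exact this.congr_deriv (by norm_num)
        have hgd : HasDerivAt g
            (Real.exp (k * t) * k * (ρ₁ t - ρ₂ t)^2 +
             Real.exp (k * t) *
               (2 * (ρ₁ t - ρ₂ t) * (-(1 / τ) * S (ρ₁ t) (ρ₂ t) - (1 / τ) * S (ρ₁ t) (ρ₂ t)))) t :=
          hE.mul hsq
        rw [hgd.deriv]
        have hkey := key_sign R c 𝒮 hc S hSC1 hS1 hS2 hdiag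
          (ρ₁ t) (hbox t ht').1 (ρ₂ t) (hbox t ht').2
        have hexp : (0:ℝ) < Real.exp (k * t) := Real.exp_pos _
        have hτ' : (0:ℝ) < 1 / τ := by positivity
        have : k * (ρ₁ t - ρ₂ t)^2 +
            2 * (ρ₁ t - ρ₂ t) * (-(1 / τ) * S (ρ₁ t) (ρ₂ t) - (1 / τ) * S (ρ₁ t) (ρ₂ t)) ≤ 0 := by
          have h4 : k = 4 * c * (1 / τ) := by rw [hk]; ring
          nlinarith [mul_le_mul_of_nonneg_left hkey hτ'.le]
        nlinarith
    intro t ht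
    have hgle : g t ≤ g 0 := hganti zero_mem ht ht.1
    have hg0 : g 0 = (ρ₁ 0 - ρ₂ 0)^2 := by simp [hg]
    set E : ℝ := Real.exp (-2 * c * t / τ) with hE
    have hEpos : 0 < E := Real.exp_pos _
    have hsq : (ρ₁ t - ρ₂ t)^2 ≤ (E * |ρ₁ 0 - ρ₂ 0|)^2 := by
      have hEE : E ^ 2 = Real.exp (-4 * c * t / τ) := by
        rw [hE, sq, ← Real.exp_add]; congr 1; ring
      have hinv : Real.exp (k * t) * E^2 = 1 := by
        rw [hEE, ← Real.exp_add, show k * t + -4 * c * t / τ = 0 by rw [hk]; field_simp; ring]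
        exact Real.exp_zero
      have h1 : Real.exp (k * t) * (ρ₁ t - ρ₂ t)^2 ≤ (ρ₁ 0 - ρ₂ 0)^2 := by
        rw [← hg0]; exact hgle
      have h2 : (E * |ρ₁ 0 - ρ₂ 0|)^2 = E^2 * (ρ₁ 0 - ρ₂ 0)^2 := by
        rw [mul_pow, sq_abs]
      nlinarith [Real.exp_pos (k * t), sq_nonneg E, sq_nonneg (ρ₁ t - ρ₂ t)]
    calc |ρ₁ t - ρ₂ t| = Real.sqrt ((ρ₁ t - ρ₂ t)^2) := (Real.sqrt_sq_eq_abs _).symm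
      _ ≤ Real.sqrt ((E * |ρ₁ 0 - ρ₂ 0|)^2) := Real.sqrt_le_sqrt hsq
      _ = E * |ρ₁ 0 - ρ₂ 0| := Real.sqrt_sq (by positivity)
  refine ⟨hsum, hdecay, ?_⟩
  intro t ht
  have h1 := hdecay t ht
  have h2 := hsum t ht
  have e1 : ρ₁ t - (ρ₁ 0 + ρ₂ 0) / 2 = (ρ₁ t - ρ₂ t) / 2 := by linarith
  have e2 : ρ₂ t - (ρ₁ 0 + ρ₂ 0) / 2 = -((ρ₁ t - ρ₂ t) / 2) := by linarith
  rw [e1, e2, abs_neg, abs_div, abs_two]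
  constructor <;> linarith
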